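/- Let F : Ω → U be a continuous frame with bounds A₀, B and frame operator S defined weakly by ⟨Sf, f⟩ = ∫_Ω ⟨f,F(ω)⟩⟨F(ω),f⟩ dμ(ω). Then S is a positive, self-adjoint, invertible adjointable operator on U satisfying A₀·I ≤ S ≤ B·I, and ‖S‖ ≤ B. -/

import Mathlib

open MeasureTheory CStarModule
open scoped RightActions

/-- The Hilbert C*-module class as Mathlib stated it in December 2024: a *right* module,
the action given by `SMul Aᵐᵒᵖ E`, with `A` an `outParam`. -/
class CStarModuleOld (A : outParam <| Type*) (E : Type*) [NonUnitalSemiring A] [StarRing A]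
    [Module ℂ A] [AddCommGroup E] [Module ℂ E] [PartialOrder A] [SMul Aᵐᵒᵖ E] [Norm A] [Norm E]
    extends Inner A E where
  inner_add_right {x} {y} {z} : inner x (y + z) = inner x y + inner x z
  inner_self_nonneg {x} : 0 ≤ inner x x
  inner_self {x} : inner x x = 0 ↔ x = 0
  inner_op_smul_right {a : A} {x y : E} : inner x (y <• a) = inner x y * a
  inner_smul_right_complex {z : ℂ} {x} {y} : inner x (z • y) = z • inner x y
  star_inner x y : star (inner x y) = inner y x
  norm_eq_sqrt_norm_inner_self x : ‖x‖ = Real.sqrt ‖inner x x‖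

variable {A : Type*} [CStarAlgebra A] [PartialOrder A] [StarOrderedRing A]
variable {U : Type*} [NormedAddCommGroup U] [NormedSpace ℂ U] [CompleteSpace U]
  [SMul Aᵐᵒᵖ U] [CStarModuleOld A U]
variable {Ω : Type*} [MeasurableSpace Ω]

local notation "⟪" x ", " y "⟫" => (inner A x y : A)

/-- `F : Ω → U` is a continuous frame for the Hilbert C*-module `U` with bounds `A₀`, `B`. -/
def IsContinuousFrame (μ : Measure Ω) (F : Ω → U) (A₀ B : ℝ) : Prop :=
  0 < A₀ ∧ 0 < B ∧
  (∀ f : U, StronglyMeasurable fun ω => (inner A f (F ω) : A)) ∧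
  (∀ f : U, Integrable (fun ω => (inner A f (F ω) : A) * inner A (F ω) f) μ) ∧
  ∀ f : U, A₀ • (inner A f f : A) ≤ (∫ ω, (inner A f (F ω) : A) * inner A (F ω) f ∂μ) ∧
    (∫ ω, (inner A f (F ω) : A) * inner A (F ω) f ∂μ) ≤ B • (inner A f f : A)

/-- `F : Ω → U` is a continuous Bessel mapping with bound `B`. -/
def IsBessel (μ : Measure Ω) (F : Ω → U) (B : ℝ) : Prop :=
  0 < B ∧
  (∀ f : U, StronglyMeasurable fun ω => (inner A f (F ω) : A)) ∧
  (∀ f : U, Integrable (fun ω => (inner A f (F ω) : A) * inner A (F ω) f) μ) ∧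
  ∀ f : U, (∫ ω, (inner A f (F ω) : A) * inner A (F ω) f ∂μ) ≤ B • (inner A f f : A)

/-- `φ : Ω → A` belongs to the Hilbert `A`-module `L²(Ω, A)`. -/
def MemL2 (μ : Measure Ω) (φ : Ω → A) : Prop :=
  AEStronglyMeasurable φ μ ∧ Integrable (fun ω => star (φ ω) * φ ω) μ

/-- `G` is a dual of the continuous Bessel mapping `F` (weak reconstruction formula). -/
def IsDual (μ : Measure Ω) (F G : Ω → U) : Prop :=
  (∃ B : ℝ, IsBessel μ G B) ∧
  ∀ f g : U, (inner A f g : A) = ∫ ω, (inner A f (G ω) : A) * inner A (F ω) g ∂μ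

namespace CStarModuleOld

lemma inner_add_left' (x y z : U) : ⟪x + y, z⟫ = ⟪x, z⟫ + ⟪y, z⟫ := by
  rw [← star_inner z (x + y), inner_add_right, star_add, star_inner, star_inner]

lemma inner_add_left {x y z : U} : ⟪x + y, z⟫ = ⟪x, z⟫ + ⟪y, z⟫ := inner_add_left' x y z

lemma inner_zero_right {x : U} : ⟪x, 0⟫ = 0 := by
  have h : ⟪x, 0 + 0⟫ = ⟪x, 0⟫ + ⟪x, 0⟫ := inner_add_right
  rw [add_zero] at h
  simpa using h

@[simp]
lemma inner_neg_right {x y : U} : ⟪x, -y⟫ = -⟪x, y⟫ := by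
  have h : ⟪x, y + -y⟫ = ⟪x, y⟫ + ⟪x, -y⟫ := inner_add_right
  rw [add_neg_cancel, inner_zero_right] at h
  exact (neg_eq_of_add_eq_zero_right h.symm).symm

lemma inner_sub_right {x y z : U} : ⟪x, y - z⟫ = ⟪x, y⟫ - ⟪x, z⟫ := by
  rw [sub_eq_add_neg, inner_add_right, inner_neg_right, ← sub_eq_add_neg]

@[simp]
lemma inner_neg_left {x y : U} : ⟪-x, y⟫ = -⟪x, y⟫ := by
  rw [← star_inner y (-x), inner_neg_right, star_neg, star_inner]

lemma inner_sub_left {x y z : U} : ⟪x - y, z⟫ = ⟪x, z⟫ - ⟪y, z⟫ := by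
  rw [← star_inner z (x - y), inner_sub_right, star_sub, star_inner, star_inner]

lemma inner_smul_left_complex {z : ℂ} {x y : U} : ⟪z • x, y⟫ = star z • ⟪x, y⟫ := by
  rw [← star_inner y (z • x), inner_smul_right_complex, star_smul, star_inner]

lemma inner_smul_right_real {r : ℝ} {x y : U} : ⟪x, r • y⟫ = r • ⟪x, y⟫ := by
  rw [RCLike.real_smul_eq_coe_smul (K := ℂ) r y, inner_smul_right_complex,
    RCLike.real_smul_eq_coe_smul (K := ℂ) r ⟪x, y⟫]

lemma inner_smul_left_real {r : ℝ} {x y : U} : ⟪r • x, y⟫ = r • ⟪x, y⟫ := by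
  rw [← star_inner y (r • x), inner_smul_right_real, star_smul, star_inner, star_trivial]

lemma norm_sq_eq {x : U} : ‖x‖ ^ 2 = ‖⟪x, x⟫‖ := by
  rw [norm_eq_sqrt_norm_inner_self x, Real.sq_sqrt (norm_nonneg _)]

end CStarModuleOld

/-- Polarization-type identity in a C*-algebra. -/
private lemma polar_aux {A' : Type*} [CStarAlgebra A'] (a b c d : A') :
    a * b = (4⁻¹ : ℂ) • (((c + a) * (b + d) - (c - a) * (b - d)) +
      Complex.I • ((c - Complex.I • a) * (b + Complex.I • d)
        - (c + Complex.I • a) * (b - Complex.I • d))) := by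
  simp only [mul_add, add_mul, mul_sub, sub_mul, smul_mul_assoc, mul_smul_comm, smul_add,
    smul_sub, smul_smul, neg_mul, mul_neg, neg_neg, Complex.I_mul_I]
  match_scalars <;> norm_num

/-- The frame operator `S` of a continuous frame with bounds `A₀, B`, defined weakly by
`⟨g, Sf⟩ = ∫ ⟨g,F(ω)⟩⟨F(ω),f⟩ dμ`, is positive, self-adjoint, invertible and satisfies
`A₀·I ≤ S ≤ B·I` and `‖S‖ ≤ B`. -/
theorem frame_operator_properties (μ : Measure Ω) (F : Ω → U) (A₀ B : ℝ)
    (hF : IsContinuousFrame μ F A₀ B) (S : U → U)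
    (hS : ∀ f g : U, ⟪g, S f⟫ = ∫ ω, ⟪g, F ω⟫ * ⟪F ω, f⟫ ∂μ) :
    (∀ f : U, 0 ≤ ⟪f, S f⟫) ∧
    (∀ f g : U, ⟪S f, g⟫ = ⟪f, S g⟫) ∧
    Function.Bijective S ∧
    (∀ f : U, A₀ • ⟪f, f⟫ ≤ ⟪f, S f⟫) ∧
    (∀ f : U, ⟪f, S f⟫ ≤ B • ⟪f, f⟫) ∧
    (∀ f : U, ‖S f‖ ≤ B * ‖f‖) := by
  obtain ⟨hA₀, hB, hmeas, hint, hbounds⟩ := hF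
  have hlow : ∀ f : U, A₀ • ⟪f, f⟫ ≤ ⟪f, S f⟫ := fun f => by
    rw [hS f f]; exact (hbounds f).1
  have hup : ∀ f : U, ⟪f, S f⟫ ≤ B • ⟪f, f⟫ := fun f => by
    rw [hS f f]; exact (hbounds f).2
  have hpos : ∀ f : U, 0 ≤ ⟪f, S f⟫ := fun f =>
    le_trans (smul_nonneg hA₀.le CStarModuleOld.inner_self_nonneg) (hlow f)
  -- off-diagonal integrability via polarization
  have hIntOff : ∀ f g : U, Integrable (fun ω => ⟪g, F ω⟫ * ⟪F ω, f⟫) μ := by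
    intro f g
    have heq : (fun ω => ⟪g, F ω⟫ * ⟪F ω, f⟫) = fun ω =>
        (4⁻¹ : ℂ) • ((⟪f + g, F ω⟫ * ⟪F ω, f + g⟫ - ⟪f - g, F ω⟫ * ⟪F ω, f - g⟫)
          + Complex.I • (⟪f + Complex.I • g, F ω⟫ * ⟪F ω, f + Complex.I • g⟫
            - ⟪f - Complex.I • g, F ω⟫ * ⟪F ω, f - Complex.I • g⟫)) := by
      funext ω
      rw [polar_aux ⟪g, F ω⟫ ⟪F ω, f⟫ ⟪f, F ω⟫ ⟪F ω, g⟫]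
      congr 2 <;>
        simp [CStarModuleOld.inner_add_left, CStarModuleOld.inner_add_right, CStarModuleOld.inner_sub_left, CStarModuleOld.inner_sub_right,
          CStarModuleOld.inner_smul_left_complex, CStarModuleOld.inner_smul_right_complex, Complex.conj_I, neg_smul,
          sub_eq_add_neg]
    rw [heq]
    exact ((((hint (f + g)).sub (hint (f - g))).add
      (((hint (f + Complex.I • g)).sub (hint (f - Complex.I • g))).smul Complex.I)).smul
        (4⁻¹ : ℂ))
  -- extensionality
  have hext : ∀ x y : U, (∀ g : U, ⟪g, x⟫ = ⟪g, y⟫) → x = y := by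
    intro x y h
    have h2 : ⟪x - y, x - y⟫ = 0 := by rw [CStarModuleOld.inner_sub_right, h (x - y), sub_self]
    exact sub_eq_zero.mp (CStarModuleOld.inner_self.mp h2)
  have hadd : ∀ f₁ f₂ : U, S (f₁ + f₂) = S f₁ + S f₂ := by
    intro f₁ f₂
    refine hext _ _ fun g => ?_
    rw [CStarModuleOld.inner_add_right, hS, hS, hS, ← integral_add (hIntOff f₁ g) (hIntOff f₂ g)]
    congr 1; funext ω; rw [CStarModuleOld.inner_add_right, mul_add]
  have hsub : ∀ f₁ f₂ : U, S (f₁ - f₂) = S f₁ - S f₂ := by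
    intro f₁ f₂
    have h := hadd (f₁ - f₂) f₂
    rw [sub_add_cancel] at h
    rw [h]; abel
  have hsmulC : ∀ (z : ℂ) (f : U), S (z • f) = z • S f := by
    intro z f
    refine hext _ _ fun g => ?_
    rw [CStarModuleOld.inner_smul_right_complex, hS, hS, ← integral_smul]
    congr 1; funext ω; rw [CStarModuleOld.inner_smul_right_complex, mul_smul_comm]
  have hsmulR : ∀ (r : ℝ) (f : U), S (r • f) = r • S f := by
    intro r f
    refine hext _ _ fun g => ?_
    rw [CStarModuleOld.inner_smul_right_real, hS, hS, ← integral_smul]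
    congr 1; funext ω; rw [CStarModuleOld.inner_smul_right_real, mul_smul_comm]
  have hsym : ∀ f g : U, ⟪S f, g⟫ = ⟪f, S g⟫ := by
    intro f g
    calc ⟪S f, g⟫ = star ⟪g, S f⟫ := (CStarModuleOld.star_inner _ _).symm
      _ = star (∫ ω, ⟪g, F ω⟫ * ⟪F ω, f⟫ ∂μ) := by rw [hS]
      _ = ∫ ω, star (⟪g, F ω⟫ * ⟪F ω, f⟫) ∂μ :=
          (ContinuousLinearEquiv.integral_comp_comm (starL' ℝ : A ≃L[ℝ] A) _).symm
      _ = ∫ ω, ⟪f, F ω⟫ * ⟪F ω, g⟫ ∂μ := by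
          congr 1; funext ω; rw [star_mul, CStarModuleOld.star_inner, CStarModuleOld.star_inner]
      _ = ⟪f, S g⟫ := (hS g f).symm
  -- key inequality : S² ≤ B S in the quadratic-form sense
  have hB0 : B ≠ 0 := ne_of_gt hB
  have hSS : ∀ f : U, ⟪S f, S f⟫ ≤ B • ⟪f, S f⟫ := by
    intro f
    have e2 : ⟪f, S (S f)⟫ = ⟪S f, S f⟫ := (hsym f (S f)).symm
    have e3 : ⟪S f, f⟫ = ⟪f, S f⟫ := hsym f f
    have hkey : B • ⟪f, S f⟫ - ⟪S f, S f⟫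
        = B⁻¹ • ((B • ⟪S f, S f⟫ - ⟪S f, S (S f)⟫) + ⟪B • f - S f, S (B • f - S f)⟫) := by
      rw [hsub (B • f) (S f), hsmulR]
      simp only [CStarModuleOld.inner_sub_left, CStarModuleOld.inner_sub_right, CStarModuleOld.inner_smul_left_real, CStarModuleOld.inner_smul_right_real,
        e2, e3]
      match_scalars <;> field_simp <;> ring
    have h1 : (0 : A) ≤ B • ⟪S f, S f⟫ - ⟪S f, S (S f)⟫ := sub_nonneg.mpr (hup (S f))
    have h2 : (0 : A) ≤ ⟪B • f - S f, S (B • f - S f)⟫ := hpos _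
    have h3 : (0 : A) ≤ B • ⟪f, S f⟫ - ⟪S f, S f⟫ := by
      rw [hkey]; exact smul_nonneg (inv_nonneg.mpr hB.le) (add_nonneg h1 h2)
    exact sub_nonneg.mp h3
  have hBB : ∀ f : U, ⟪S f, S f⟫ ≤ (B * B) • ⟪f, f⟫ := fun f =>
    (hSS f).trans (by rw [← smul_smul]; exact smul_le_smul_of_nonneg_left (hup f) hB.le)
  have hnorm : ∀ f : U, ‖S f‖ ≤ B * ‖f‖ := by
    intro f
    have h1 : ‖S f‖ ^ 2 ≤ (B * ‖f‖) ^ 2 := by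
      rw [CStarModuleOld.norm_sq_eq]
      calc ‖⟪S f, S f⟫‖ ≤ ‖(B * B) • ⟪f, f⟫‖ :=
            CStarAlgebra.norm_le_norm_of_nonneg_of_le CStarModuleOld.inner_self_nonneg (hBB f)
        _ = (B * B) * ‖⟪f, f⟫‖ := by
            rw [norm_smul, Real.norm_of_nonneg (by positivity)]
        _ = (B * ‖f‖) ^ 2 := by rw [← CStarModuleOld.norm_sq_eq]; ring
    nlinarith [norm_nonneg (S f), mul_nonneg hB.le (norm_nonneg f)]
  refine ⟨hpos, hsym, ?_, hlow, hup, hnorm⟩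
  -- bijectivity
  by_cases hU : ∀ x : U, x = 0
  · exact ⟨fun a b _ => by rw [hU a, hU b], fun y => ⟨y, by rw [hU (S y), hU y]⟩⟩
  push_neg at hU
  obtain ⟨x₀, hx₀⟩ := hU
  have hAB : A₀ ≤ B := by
    by_contra hAB
    push_neg at hAB
    have h1 : A₀ • ⟪x₀, x₀⟫ ≤ B • ⟪x₀, x₀⟫ := (hlow x₀).trans (hup x₀)
    have h2 : (0 : A) ≤ (B - A₀) • ⟪x₀, x₀⟫ := by rw [sub_smul]; exact sub_nonneg.mpr h1
    have h3 : (B - A₀) • ⟪x₀, x₀⟫ ≤ 0 :=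
      smul_nonpos_of_nonpos_of_nonneg (by linarith) CStarModuleOld.inner_self_nonneg
    have h4 : (B - A₀) • ⟪x₀, x₀⟫ = 0 := le_antisymm h3 h2
    have h5 : ⟪x₀, x₀⟫ = 0 := by
      have h6 := congrArg (fun a : A => (B - A₀)⁻¹ • a) h4
      simpa [smul_smul, inv_mul_cancel₀ (show B - A₀ ≠ 0 by linarith)] using h6
    exact hx₀ (CStarModuleOld.inner_self.mp h5)
  have hA₀B : (0 : ℝ) < A₀ + B := by linarith
  set c : ℝ := 2 / (A₀ + B) with hc
  have hc0 : 0 < c := by positivity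
  have hcB : 2 - c * B = 2 * A₀ / (A₀ + B) := by rw [hc]; field_simp; ring
  have hcB0 : 0 < 2 - c * B := by rw [hcB]; positivity
  set κ : ℝ := 1 - c * (2 - c * B) * A₀ with hκ
  have hκval : κ = (B - A₀) * (B + 3 * A₀) / ((A₀ + B) * (A₀ + B)) := by
    rw [hκ, hc]; field_simp; ring
  have hκ0 : 0 ≤ κ := by
    rw [hκval]
    have h1 : 0 ≤ B - A₀ := by linarith
    positivity
  have hκ1 : κ < 1 := by
    have : 0 < c * (2 - c * B) * A₀ := by positivity
    rw [hκ]; linarith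
  have hcontr : ∀ f : U, ⟪f - c • S f, f - c • S f⟫ ≤ κ • ⟪f, f⟫ := by
    intro f
    have e3 : ⟪S f, f⟫ = ⟪f, S f⟫ := hsym f f
    have hid : κ • ⟪f, f⟫ - ⟪f - c • S f, f - c • S f⟫
        = (c * (2 - c * B)) • (⟪f, S f⟫ - A₀ • ⟪f, f⟫)
          + (c * c) • (B • ⟪f, S f⟫ - ⟪S f, S f⟫) := by
      simp only [CStarModuleOld.inner_sub_left, CStarModuleOld.inner_sub_right, CStarModuleOld.inner_smul_left_real, CStarModuleOld.inner_smul_right_real,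
        e3, hκ]
      match_scalars <;> ring
    have h1 : (0 : A) ≤ (c * (2 - c * B)) • (⟪f, S f⟫ - A₀ • ⟪f, f⟫) :=
      smul_nonneg (by positivity) (sub_nonneg.mpr (hlow f))
    have h2 : (0 : A) ≤ (c * c) • (B • ⟪f, S f⟫ - ⟪S f, S f⟫) :=
      smul_nonneg (mul_self_nonneg c) (sub_nonneg.mpr (hSS f))
    have h3 : (0 : A) ≤ κ • ⟪f, f⟫ - ⟪f - c • S f, f - c • S f⟫ := by
      rw [hid]; exact add_nonneg h1 h2
    exact sub_nonneg.mp h3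
  have hcontrnorm : ∀ f : U, ‖f - c • S f‖ ≤ Real.sqrt κ * ‖f‖ := by
    intro f
    have h1 : ‖f - c • S f‖ ^ 2 ≤ κ * ‖f‖ ^ 2 := by
      rw [CStarModuleOld.norm_sq_eq]
      calc ‖⟪f - c • S f, f - c • S f⟫‖ ≤ ‖κ • ⟪f, f⟫‖ :=
            CStarAlgebra.norm_le_norm_of_nonneg_of_le CStarModuleOld.inner_self_nonneg (hcontr f)
        _ = κ * ‖f‖ ^ 2 := by rw [norm_smul, Real.norm_of_nonneg hκ0, CStarModuleOld.norm_sq_eq]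
    have h2 : (Real.sqrt κ * ‖f‖) ^ 2 = κ * ‖f‖ ^ 2 := by
      rw [mul_pow, Real.sq_sqrt hκ0]
    nlinarith [norm_nonneg (f - c • S f), Real.sqrt_nonneg κ, norm_nonneg f,
      mul_nonneg (Real.sqrt_nonneg κ) (norm_nonneg f)]
  -- the frame operator as a continuous linear map
  let Slin : U →L[ℂ] U := LinearMap.mkContinuous
    { toFun := S, map_add' := hadd, map_smul' := fun z f => hsmulC z f } B
    (fun f => hnorm f)
  have hSlin : ∀ f : U, Slin f = S f := fun _ => rfl
  let Tlin : U →L[ℂ] U := 1 - c • Slin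
  have hTf : ∀ f : U, Tlin f = f - c • S f := by
    intro f
    simp [Tlin, ContinuousLinearMap.sub_apply, ContinuousLinearMap.smul_apply,
      ContinuousLinearMap.one_apply, hSlin]
  have hTnorm : ‖Tlin‖ < 1 := by
    refine lt_of_le_of_lt
      (ContinuousLinearMap.opNorm_le_bound _ (Real.sqrt_nonneg κ) fun f => by
        rw [hTf]; exact hcontrnorm f) ?_
    calc Real.sqrt κ < Real.sqrt 1 := Real.sqrt_lt_sqrt hκ0 hκ1
      _ = 1 := Real.sqrt_one
  let u : (U →L[ℂ] U)ˣ := Units.oneSub Tlin hTnorm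
  have huval : (u : U →L[ℂ] U) = c • Slin := by
    show 1 - Tlin = c • Slin
    show 1 - (1 - c • Slin) = c • Slin
    rw [sub_sub_cancel]
  constructor
  · intro a b hab
    have hd : S (a - b) = 0 := by rw [hsub, hab, sub_self]
    have h0 : ⟪a - b, a - b⟫ = 0 := by
      have h1 : A₀ • ⟪a - b, a - b⟫ ≤ 0 := by
        have h := hlow (a - b); rwa [hd, CStarModuleOld.inner_zero_right] at h
      have h2 : (0 : A) ≤ A₀ • ⟪a - b, a - b⟫ := smul_nonneg hA₀.le CStarModuleOld.inner_self_nonneg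
      have h3 : A₀ • ⟪a - b, a - b⟫ = 0 := le_antisymm h1 h2
      calc ⟪a - b, a - b⟫ = A₀⁻¹ • (A₀ • ⟪a - b, a - b⟫) := by
            rw [smul_smul, inv_mul_cancel₀ hA₀.ne', one_smul]
        _ = 0 := by rw [h3, smul_zero]
    exact sub_eq_zero.mp (CStarModuleOld.inner_self.mp h0)
  · intro y
    refine ⟨c • (((u⁻¹ : (U →L[ℂ] U)ˣ) : U →L[ℂ] U) y), ?_⟩
    rw [hsmulR]
    have h1 : (u : U →L[ℂ] U) (((u⁻¹ : (U →L[ℂ] U)ˣ) : U →L[ℂ] U) y) = y := by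
      rw [← ContinuousLinearMap.comp_apply, ← ContinuousLinearMap.mul_def, u.mul_inv,
        ContinuousLinearMap.one_apply]
    rw [huval] at h1
    simpa [ContinuousLinearMap.smul_apply, hSlin] using h1
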